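/- Let L_A be the (4n+1)×(4n+1) real tridiagonal matrix with diagonal entries (2,4,4,...,4,2) and all sub/super-diagonal entries equal to -2. Then the sum of the reciprocals of the nonzero eigenvalues of L_A equals n(4n+2)/3. -/

import Mathlib

open Finset Matrix

lemma sum_three {N : ℕ} (a b c : Fin N) (hab : a ≠ b) (hbc : b ≠ c) (hac : a ≠ c)
    (f : Fin N → ℝ) (h0 : ∀ j, j ≠ a → j ≠ b → j ≠ c → f j = 0) :
    ∑ j, f j = f a + f b + f c := by
  have : ∑ j, f j = ∑ j ∈ ({a, b, c} : Finset (Fin N)), f j := by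
    refine (Finset.sum_subset (Finset.subset_univ _) ?_).symm
    intro x _ hx
    simp only [Finset.mem_insert, Finset.mem_singleton, not_or] at hx
    exact h0 x hx.1 hx.2.1 hx.2.2
  rw [this, Finset.sum_insert (by simp [hab, hac]), Finset.sum_insert (by simp [hbc]),
    Finset.sum_singleton, add_assoc]

lemma sum_two {N : ℕ} (a b : Fin N) (hab : a ≠ b)
    (f : Fin N → ℝ) (h0 : ∀ j, j ≠ a → j ≠ b → f j = 0) :
    ∑ j, f j = f a + f b := by
  have : ∑ j, f j = ∑ j ∈ ({a, b} : Finset (Fin N)), f j := by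
    refine (Finset.sum_subset (Finset.subset_univ _) ?_).symm
    intro x _ hx
    simp only [Finset.mem_insert, Finset.mem_singleton, not_or] at hx
    exact h0 x hx.1 hx.2
  rw [this, Finset.sum_insert (by simp [hab]), Finset.sum_singleton]

/-- The `(4n+1) × (4n+1)` tridiagonal matrix `L_A` with diagonal `(2,4,4,...,4,2)`
and all sub/super-diagonal entries `-2`. -/
def matLA (n : ℕ) : Matrix (Fin (4 * n + 1)) (Fin (4 * n + 1)) ℝ := fun i j =>
  if i = j then (if i.val = 0 ∨ i.val = 4 * n then 2 else 4)
  else if i.val + 1 = j.val ∨ j.val + 1 = i.val then -2 else 0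

lemma matLA_diag2 (n k : ℕ) (h : k = 0 ∨ k = 4*n) (hk : k < 4*n+1) :
    matLA n ⟨k,hk⟩ ⟨k,hk⟩ = 2 := by
  simp only [matLA]
  rw [if_pos trivial, if_pos h]

lemma matLA_diag4 (n k : ℕ) (h1 : k ≠ 0) (h2 : k ≠ 4*n) (hk : k < 4*n+1) :
    matLA n ⟨k,hk⟩ ⟨k,hk⟩ = 4 := by
  simp only [matLA]
  rw [if_pos trivial, if_neg (by omega)]

lemma matLA_off (n k l : ℕ) (h : k+1 = l ∨ l+1 = k) (hk : k < 4*n+1) (hl : l < 4*n+1) :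
    matLA n ⟨k,hk⟩ ⟨l,hl⟩ = -2 := by
  simp only [matLA]
  rw [if_neg (by simp only [Fin.ext_iff]; omega), if_pos h]

lemma row_zero (n : ℕ) (hn : 0 < n) (x : Fin (4*n+1) → ℝ) :
    ∑ j, matLA n ⟨0, by omega⟩ j * x j
      = 2 * x ⟨0, by omega⟩ - 2 * x ⟨1, by omega⟩ := by
  rw [sum_two ⟨0, by omega⟩ ⟨1, by omega⟩ (by simp [Fin.ext_iff])]
  · rw [matLA_diag2 n 0 (Or.inl rfl), matLA_off n 0 1 (Or.inl rfl)]
    ring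
  · intro j hj0 hj1
    have h0 : j.val ≠ 0 := fun h => hj0 (Fin.ext h)
    have h1 : j.val ≠ 1 := fun h => hj1 (Fin.ext h)
    simp only [matLA, Fin.ext_iff]
    rw [if_neg (by omega), if_neg (by omega), zero_mul]

lemma row_last (n : ℕ) (k : ℕ) (hk : k + 1 = 4 * n) (x : Fin (4*n+1) → ℝ) :
    ∑ j, matLA n ⟨k+1, by omega⟩ j * x j
      = -2 * x ⟨k, by omega⟩ + 2 * x ⟨k+1, by omega⟩ := by
  rw [sum_two ⟨k, by omega⟩ ⟨k+1, by omega⟩ (by simp [Fin.ext_iff])]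
  · rw [matLA_off n (k+1) k (Or.inr rfl), matLA_diag2 n (k+1) (Or.inr hk)]
  · intro j hj0 hj1
    have h0 : j.val ≠ k := fun h => hj0 (Fin.ext h)
    have h1 : j.val ≠ k + 1 := fun h => hj1 (Fin.ext h)
    have := j.isLt
    simp only [matLA, Fin.ext_iff]
    rw [if_neg (by omega), if_neg (by omega), zero_mul]

lemma row_mid (n : ℕ) (k : ℕ) (hk : k + 2 ≤ 4 * n) (x : Fin (4*n+1) → ℝ) :
    ∑ j, matLA n ⟨k+1, by omega⟩ j * x j
      = -2 * x ⟨k, by omega⟩ + 4 * x ⟨k+1, by omega⟩ - 2 * x ⟨k+2, by omega⟩ := by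
  rw [sum_three ⟨k, by omega⟩ ⟨k+1, by omega⟩ ⟨k+2, by omega⟩
    (by simp [Fin.ext_iff]) (by simp [Fin.ext_iff]) (by simp [Fin.ext_iff])]
  · rw [matLA_off n (k+1) k (Or.inr rfl), matLA_diag4 n (k+1) (by omega) (by omega),
      matLA_off n (k+1) (k+2) (Or.inl rfl)]
    ring
  · intro j hj0 hj1 hj2
    have h0 : j.val ≠ k := fun h => hj0 (Fin.ext h)
    have h1 : j.val ≠ k + 1 := fun h => hj1 (Fin.ext h)
    have h2 : j.val ≠ k + 2 := fun h => hj2 (Fin.ext h)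
    simp only [matLA, Fin.ext_iff]
    rw [if_neg (by omega), if_neg (by omega), zero_mul]

lemma ker_constant (n : ℕ) (hn : 0 < n) (x : Fin (4*n+1) → ℝ)
    (hx : ∀ i, ∑ j, matLA n i j * x j = 0) :
    ∀ i : Fin (4*n+1), x i = x ⟨0, by omega⟩ := by
  have step : ∀ k (hk2 : k + 1 ≤ 4*n), x ⟨k+1, by omega⟩ = x ⟨k, by omega⟩ := by
    intro k
    induction k with
    | zero =>
      intro hk2
      have h0 := hx ⟨0, by omega⟩
      rw [row_zero n hn] at h0
      linarith
    | succ m ih =>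
      intro hk2
      have hmid := hx ⟨m+1, by omega⟩
      rw [row_mid n m (by omega)] at hmid
      have hprev := ih (by omega)
      linarith
  intro i
  obtain ⟨v, hv⟩ := i
  induction v with
  | zero => rfl
  | succ w ihw =>
    rw [step w (by omega), ihw (by omega)]

noncomputable def gf (n a b : ℕ) : ℝ :=
  ((a:ℝ)*(a+1) + (4*(n:ℝ) - b)*(4*(n:ℝ)+1 - b)) / (4*(4*(n:ℝ)+1))
    - ((4*(n:ℝ)+1)^2 - 1)/(12*(4*(n:ℝ)+1))

noncomputable def matG (n : ℕ) : Matrix (Fin (4*n+1)) (Fin (4*n+1)) ℝ := fun i j =>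
  gf n (min i.val j.val) (max i.val j.val)

lemma matG_symm (n : ℕ) (i j : Fin (4*n+1)) : matG n i j = matG n j i := by
  simp only [matG]
  rw [Nat.min_comm, Nat.max_comm]

lemma S1 (N : ℕ) : ∑ j ∈ range N, (j:ℝ) = N*(N-1)/2 := by
  induction N with
  | zero => simp
  | succ m ih =>
    rw [Finset.sum_range_succ, ih]
    push_cast
    ring

lemma S2 (N : ℕ) : ∑ j ∈ range N, (j:ℝ)^2 = N*(N-1)*(2*N-1)/6 := by
  induction N with
  | zero => simp
  | succ m ih =>
    rw [Finset.sum_range_succ, ih]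
    push_cast
    ring

lemma sumA (n : ℕ) :
    ∑ j ∈ range (4*n+1), ((4*(n:ℝ) - j)*(4*(n:ℝ)+1 - j))
      = (4*(n:ℝ)+1)*((4*(n:ℝ)+1)^2-1)/3 := by
  have h : ∀ j ∈ range (4*n+1),
      ((4*(n:ℝ) - j)*(4*(n:ℝ)+1 - j))
        = (j:ℝ)^2 - (8*(n:ℝ)+1)*(j:ℝ) + (4*(n:ℝ))*(4*(n:ℝ)+1) := by
    intro j _; ring
  rw [Finset.sum_congr rfl h, Finset.sum_add_distrib, Finset.sum_sub_distrib,
    S2, ← Finset.mul_sum, S1, Finset.sum_const, Finset.card_range]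
  push_cast
  ring

lemma sumB (n : ℕ) :
    ∑ j ∈ range (4*n+1), ((j:ℝ)*((j:ℝ)+1))
      = (4*(n:ℝ)+1)*((4*(n:ℝ)+1)^2-1)/3 := by
  have h : ∀ j ∈ range (4*n+1), ((j:ℝ)*((j:ℝ)+1)) = (j:ℝ)^2 + (j:ℝ) := by
    intro j _; ring
  rw [Finset.sum_congr rfl h, Finset.sum_add_distrib, S2, S1]
  push_cast
  ring

lemma rowG0 (n : ℕ) (hn : 0 < n) : ∑ j, matG n ⟨0, by omega⟩ j = 0 := by
  have h1 : ∀ j : Fin (4*n+1), matG n ⟨0, by omega⟩ j = gf n 0 j.val := by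
    intro j
    simp only [matG]
    rw [Nat.min_eq_left (Nat.zero_le _), Nat.max_eq_right (Nat.zero_le _)]
  rw [Finset.sum_congr rfl (fun j _ => h1 j), Fin.sum_univ_eq_sum_range (fun j => gf n 0 j)]
  have hK : (4*(n:ℝ)+1) ≠ 0 := by positivity
  simp only [gf]
  rw [Finset.sum_sub_distrib, Finset.sum_const, Finset.card_range, ← Finset.sum_div]
  simp only [Nat.cast_zero, zero_mul, zero_add]
  rw [sumA]
  rw [nsmul_eq_mul]
  push_cast
  field_simp
  ring

lemma traceG (n : ℕ) :
    ∑ i, matG n i i = (((4*(n:ℝ)+1))^2 - 1)/12 := by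
  have h1 : ∀ i : Fin (4*n+1), matG n i i = gf n i.val i.val := by
    intro i
    simp only [matG, Nat.min_self, Nat.max_self]
  rw [Finset.sum_congr rfl (fun i _ => h1 i), Fin.sum_univ_eq_sum_range (fun i => gf n i i)]
  have hK : (4*(n:ℝ)+1) ≠ 0 := by positivity
  simp only [gf]
  rw [Finset.sum_sub_distrib, Finset.sum_const, Finset.card_range, ← Finset.sum_div,
    Finset.sum_add_distrib, sumA, sumB]
  rw [nsmul_eq_mul]
  push_cast
  field_simp
  ring

lemma AG_entry (n : ℕ) (hn : 0 < n) (i j : Fin (4*n+1)) :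
    ∑ m, matLA n i m * matG n m j
      = (if i = j then 1 else 0) - 1/(4*(n:ℝ)+1) := by
  have hK : (4*(n:ℝ)+1) ≠ 0 := by positivity
  obtain ⟨iv, hiv⟩ := i
  obtain ⟨jv, hjv⟩ := j
  rcases iv with _ | k
  · -- first row
    rw [row_zero n hn (fun m => matG n m ⟨jv, hjv⟩)]
    by_cases hj0 : jv = 0
    · subst hj0
      rw [if_pos rfl]
      have e1 : matG n ⟨0, by omega⟩ ⟨0, hjv⟩ = gf n 0 0 := rfl
      have e2 : matG n ⟨1, by omega⟩ ⟨0, hjv⟩ = gf n (min 1 0) (max 1 0) := rfl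
      rw [e1, e2, show min 1 0 = 0 by omega, show max 1 0 = 1 by omega]
      simp only [gf]
      push_cast
      field_simp
      ring
    · rw [if_neg (by simp only [Fin.ext_iff]; omega)]
      have e1 : matG n ⟨0, by omega⟩ ⟨jv, hjv⟩ = gf n (min 0 jv) (max 0 jv) := rfl
      have e2 : matG n ⟨1, by omega⟩ ⟨jv, hjv⟩ = gf n (min 1 jv) (max 1 jv) := rfl
      rw [e1, e2, show min 0 jv = 0 by omega, show max 0 jv = jv by omega,
        show min 1 jv = 1 by omega, show max 1 jv = jv by omega]
      simp only [gf]
      push_cast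
      field_simp
      ring
  · by_cases hlast : k + 1 = 4*n
    · -- last row
      rw [row_last n k hlast (fun m => matG n m ⟨jv, hjv⟩)]
      have e0 : matG n ⟨k, by omega⟩ ⟨jv, hjv⟩ = gf n (min k jv) (max k jv) := rfl
      have e1 : matG n ⟨k+1, by omega⟩ ⟨jv, hjv⟩ = gf n (min (k+1) jv) (max (k+1) jv) := rfl
      by_cases hj : jv = k + 1
      · subst hj
        rw [if_pos (by simp only [Fin.ext_iff])]
        rw [e0, e1, show min k (k+1) = k by omega, show max k (k+1) = k+1 by omega,
          show min (k+1) (k+1) = k+1 by omega, show max (k+1) (k+1) = k+1 by omega]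
        have h4n : 4*(n:ℝ) = (k:ℝ)+1 := by
          have := congrArg (Nat.cast : ℕ → ℝ) hlast
          push_cast at this
          linarith
        simp only [gf]
        push_cast
        rw [h4n]
        have hK' : ((k:ℝ)+1+1) ≠ 0 := by positivity
        field_simp
        ring
      · -- jv ≤ k
        have hjk : jv ≤ k := by omega
        rw [if_neg (by simp only [Fin.ext_iff]; omega)]
        rw [e0, e1, show min k jv = jv by omega, show max k jv = k by omega,
          show min (k+1) jv = jv by omega, show max (k+1) jv = k+1 by omega]
        have h4n : 4*(n:ℝ) = (k:ℝ)+1 := by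
          have := congrArg (Nat.cast : ℕ → ℝ) hlast
          push_cast at this
          linarith
        simp only [gf]
        push_cast
        rw [h4n]
        have hK' : ((k:ℝ)+1+1) ≠ 0 := by positivity
        field_simp
        ring
    · -- middle row
      have hk2 : k + 2 ≤ 4*n := by omega
      rw [row_mid n k hk2 (fun m => matG n m ⟨jv, hjv⟩)]
      have e0 : matG n ⟨k, by omega⟩ ⟨jv, hjv⟩ = gf n (min k jv) (max k jv) := rfl
      have e1 : matG n ⟨k+1, by omega⟩ ⟨jv, hjv⟩ = gf n (min (k+1) jv) (max (k+1) jv) := rfl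
      have e2 : matG n ⟨k+2, by omega⟩ ⟨jv, hjv⟩ = gf n (min (k+2) jv) (max (k+2) jv) := rfl
      rcases Nat.lt_trichotomy jv (k+1) with hj | hj | hj
      · rw [if_neg (by simp only [Fin.ext_iff]; omega)]
        rw [e0, e1, e2, show min k jv = jv by omega, show max k jv = k by omega,
          show min (k+1) jv = jv by omega, show max (k+1) jv = k+1 by omega,
          show min (k+2) jv = jv by omega, show max (k+2) jv = k+2 by omega]
        simp only [gf]
        push_cast
        field_simp
        ring
      · subst hj
        rw [if_pos (by simp only [Fin.ext_iff])]
        rw [e0, e1, e2, show min k (k+1) = k by omega, show max k (k+1) = k+1 by omega,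
          show min (k+1) (k+1) = k+1 by omega, show max (k+1) (k+1) = k+1 by omega,
          show min (k+2) (k+1) = k+1 by omega, show max (k+2) (k+1) = k+2 by omega]
        simp only [gf]
        push_cast
        field_simp
        ring
      · rw [if_neg (by simp only [Fin.ext_iff]; omega)]
        rw [e0, e1, e2, show min k jv = k by omega, show max k jv = jv by omega,
          show min (k+1) jv = k+1 by omega, show max (k+1) jv = jv by omega,
          show min (k+2) jv = k+2 by omega, show max (k+2) jv = jv by omega]
        simp only [gf]
        push_cast
        field_simp
        ring

/-- The sum of the reciprocals of the nonzero eigenvalues of `L_A` equals `n(4n+2)/3`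
(reciprocals taken in `ℝ` with `0⁻¹ = 0`; `L_A` has exactly one zero eigenvalue). -/
theorem sum_inv_eigenvalues_matLA (n : ℕ) (hn : 0 < n) (h : (matLA n).IsHermitian) :
    ∑ i, (h.eigenvalues i)⁻¹ = (n : ℝ) * (4 * n + 2) / 3 := by
  classical
  set U : Matrix (Fin (4*n+1)) (Fin (4*n+1)) ℝ := (↑h.eigenvectorUnitary : Matrix (Fin (4*n+1)) (Fin (4*n+1)) ℝ)
    with hUdef
  set lam : Fin (4*n+1) → ℝ := h.eigenvalues with hlamdef
  have hs : matLA n = U * Matrix.diagonal lam * star U := by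
    have := h.spectral_theorem
    rw [Unitary.conjStarAlgAut_apply] at this
    simpa only [RCLike.ofReal_real_eq_id, Function.comp_id, Function.id_comp] using this
  have h1 : star U * U = 1 := Unitary.coe_star_mul_self _
  have h2 : U * star U = 1 := Unitary.coe_mul_star_self _
  have horth : ∀ k l, ∑ a, U a k * U a l = if k = l then 1 else 0 := by
    intro k l
    have := congrFun (congrFun h1 k) l
    simpa [Matrix.mul_apply, Matrix.star_apply, Matrix.one_apply] using this
  have horth2 : ∀ a b, ∑ k, U a k * U b k = if a = b then 1 else 0 := by
    intro a b
    have := congrFun (congrFun h2 a) b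
    simpa [Matrix.mul_apply, Matrix.star_apply, Matrix.one_apply] using this
  have hAU : matLA n * U = U * Matrix.diagonal lam := by
    conv_lhs => rw [hs]
    rw [mul_assoc, h1, mul_one]
  have coleig : ∀ k a, ∑ m, matLA n a m * U m k = lam k * U a k := by
    intro k a
    have := congrFun (congrFun hAU a) k
    rw [Matrix.mul_apply, Matrix.mul_apply] at this
    simp only [Matrix.diagonal_apply, mul_ite, mul_zero, Finset.sum_ite_eq',
      Finset.mem_univ, if_true] at this
    exact this.trans (mul_comm _ _)
  have hones : ∀ i : Fin (4*n+1), ∑ m, matLA n i m * (1:ℝ) = 0 := by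
    intro i
    obtain ⟨iv, hiv⟩ := i
    rcases iv with _ | k
    · rw [row_zero n hn (fun _ => 1)]; ring
    · by_cases hlast : k+1 = 4*n
      · rw [row_last n k hlast (fun _ => 1)]; ring
      · rw [row_mid n k (by omega) (fun _ => 1)]; ring
  have hdet : (matLA n).det = 0 := by
    rw [← Matrix.exists_mulVec_eq_zero_iff]
    refine ⟨fun _ => 1, ?_, ?_⟩
    · intro hz
      have := congrFun hz ⟨0, by omega⟩
      norm_num at this
    · funext i
      simpa [Matrix.mulVec, dotProduct] using hones i
  have hprod : ∏ i, lam i = 0 := by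
    have := h.det_eq_prod_eigenvalues
    rw [hdet] at this
    simpa using this.symm
  obtain ⟨i₀, -, hi₀⟩ := Finset.prod_eq_zero_iff.mp hprod
  have hcol0 : ∀ k, lam k = 0 → ∀ a, U a k = U ⟨0, by omega⟩ k := by
    intro k hk
    apply ker_constant n hn (fun a => U a k)
    intro i
    rw [coleig k i, hk, zero_mul]
  have hnorm : ∀ k, ∑ a, U a k * U a k = 1 := by
    intro k
    simpa using horth k k
  have hw0 : ∀ a, U a i₀ = U ⟨0, by omega⟩ i₀ := hcol0 i₀ hi₀
  have hcard : (Finset.univ : Finset (Fin (4*n+1))).card = 4*n+1 := by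
    simp
  have hw0sq : (4*(n:ℝ)+1) * (U ⟨0, by omega⟩ i₀)^2 = 1 := by
    have hh := hnorm i₀
    rw [Finset.sum_congr rfl (fun a _ => by rw [hw0 a])] at hh
    rw [Finset.sum_const, hcard, nsmul_eq_mul] at hh
    push_cast at hh
    linear_combination hh
  have hw0ne : U ⟨0, by omega⟩ i₀ ≠ 0 := by
    intro h0
    rw [h0] at hw0sq
    norm_num at hw0sq
  have huniq : ∀ k, lam k = 0 → k = i₀ := by
    intro k hk
    by_contra hne
    have horthk := horth k i₀
    rw [if_neg hne] at horthk
    have hconst := hcol0 k hk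
    rw [Finset.sum_congr rfl (fun a _ => by rw [hconst a, hw0 a]),
      Finset.sum_const, hcard, nsmul_eq_mul] at horthk
    have hk0 : U ⟨0, by omega⟩ k = 0 := by
      have hNne : ((4*n+1 : ℕ) : ℝ) ≠ 0 := by positivity
      have h' := (mul_eq_zero.mp horthk).resolve_left hNne
      exact (mul_eq_zero.mp h').resolve_right hw0ne
    have hnk := hnorm k
    rw [Finset.sum_congr rfl (fun a _ => by rw [hconst a]), hk0,
      Finset.sum_const, hcard] at hnk
    norm_num at hnk
  set B : Matrix (Fin (4*n+1)) (Fin (4*n+1)) ℝ :=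
    fun i j => ∑ k, U i k * (lam k)⁻¹ * U j k with hBdef
  have htrB : ∑ i, B i i = ∑ k, (lam k)⁻¹ := by
    simp only [hBdef]
    rw [Finset.sum_comm]
    refine Finset.sum_congr rfl fun k _ => ?_
    have : ∀ i : Fin (4*n+1), U i k * (lam k)⁻¹ * U i k = (lam k)⁻¹ * (U i k * U i k) := by
      intro i; ring
    rw [Finset.sum_congr rfl (fun i _ => this i), ← Finset.mul_sum, hnorm k, mul_one]
  have hw0sq' : U ⟨0, by omega⟩ i₀ ^ 2 = 1/(4*(n:ℝ)+1) := by
    have hKne : (4*(n:ℝ)+1) ≠ 0 := by positivity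
    rw [eq_div_iff hKne]
    linear_combination hw0sq
  have hAB : ∀ i j, ∑ m, matLA n i m * B m j
      = (if i = j then 1 else 0) - 1/(4*(n:ℝ)+1) := by
    intro i j
    have swap : ∑ m, matLA n i m * B m j
        = ∑ k, (∑ m, matLA n i m * U m k) * ((lam k)⁻¹ * U j k) := by
      simp only [hBdef]
      calc ∑ m, matLA n i m * ∑ k, U m k * (lam k)⁻¹ * U j k
          = ∑ m, ∑ k, matLA n i m * (U m k * (lam k)⁻¹ * U j k) :=
            Finset.sum_congr rfl fun m _ => Finset.mul_sum _ _ _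
        _ = ∑ k, ∑ m, matLA n i m * (U m k * (lam k)⁻¹ * U j k) := Finset.sum_comm
        _ = ∑ k, (∑ m, matLA n i m * U m k) * ((lam k)⁻¹ * U j k) := by
            refine Finset.sum_congr rfl fun k _ => ?_
            rw [Finset.sum_mul]
            exact Finset.sum_congr rfl fun m _ => by ring
    rw [swap]
    have hind : ∀ k : Fin (4*n+1), (∑ m, matLA n i m * U m k) * ((lam k)⁻¹ * U j k)
        = (U i k * U j k) - (if k = i₀ then U i k * U j k else 0) := by
      intro k
      rw [coleig k i]
      by_cases hk : lam k = 0
      · rw [if_pos (huniq k hk), hk]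
        simp
      · rw [if_neg (fun he : k = i₀ => hk (by rw [he]; exact hi₀))]
        field_simp
        ring
    rw [Finset.sum_congr rfl (fun k _ => hind k), Finset.sum_sub_distrib, horth2 i j,
      Finset.sum_ite_eq' Finset.univ i₀ (fun k => U i k * U j k)]
    simp only [Finset.mem_univ, if_true]
    rw [hw0 i, hw0 j, ← sq, hw0sq']
  have hBsymm : ∀ i j, B i j = B j i := by
    intro i j
    simp only [hBdef]
    exact Finset.sum_congr rfl fun k _ => by ring
  have hCcol : ∀ (j i : Fin (4*n+1)),
      B i j - matG n i j = B ⟨0, by omega⟩ j - matG n ⟨0, by omega⟩ j := by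
    intro j
    apply ker_constant n hn (fun m => B m j - matG n m j)
    intro i
    have he : ∑ m, matLA n i m * (B m j - matG n m j)
        = (∑ m, matLA n i m * B m j) - ∑ m, matLA n i m * matG n m j := by
      rw [← Finset.sum_sub_distrib]
      exact Finset.sum_congr rfl fun m _ => by ring
    rw [he, hAB i j, AG_entry n hn i j]
    ring
  have colsum : ∀ k, k ≠ i₀ → ∑ a, U a k = 0 := by
    intro k hk
    have horthk := horth k i₀
    rw [if_neg hk] at horthk
    rw [Finset.sum_congr rfl (fun a (_ : a ∈ Finset.univ) => by rw [hw0 a]),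
      ← Finset.sum_mul] at horthk
    exact (mul_eq_zero.mp horthk).resolve_right hw0ne
  have hBrow0 : ∑ j, B ⟨0, by omega⟩ j = 0 := by
    simp only [hBdef]
    rw [Finset.sum_comm]
    refine Finset.sum_eq_zero fun k _ => ?_
    by_cases hk : k = i₀
    · subst hk
      refine Finset.sum_eq_zero fun j _ => ?_
      rw [hi₀]
      simp
    · have : ∑ j, U ⟨0, by omega⟩ k * (lam k)⁻¹ * U j k
          = (U ⟨0, by omega⟩ k * (lam k)⁻¹) * ∑ j, U j k := by
        rw [Finset.mul_sum]
      rw [this, colsum k hk, mul_zero]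
  have hconstC : ∀ j : Fin (4*n+1), B ⟨0, by omega⟩ j - matG n ⟨0, by omega⟩ j
      = B ⟨0, by omega⟩ ⟨0, by omega⟩ - matG n ⟨0, by omega⟩ ⟨0, by omega⟩ := by
    intro j
    rw [hBsymm, matG_symm]
    exact hCcol ⟨0, by omega⟩ j
  have hc0 : B ⟨0, by omega⟩ ⟨0, by omega⟩ - matG n ⟨0, by omega⟩ ⟨0, by omega⟩ = 0 := by
    have hsum : ∑ j, (B ⟨0, by omega⟩ j - matG n ⟨0, by omega⟩ j) = 0 := by
      rw [Finset.sum_sub_distrib, hBrow0, rowG0 n hn]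
      ring
    rw [Finset.sum_congr rfl (fun j _ => hconstC j), Finset.sum_const, hcard,
      nsmul_eq_mul] at hsum
    have hNne : ((4*n+1 : ℕ) : ℝ) ≠ 0 := by positivity
    exact (mul_eq_zero.mp hsum).resolve_left hNne
  have hBG : ∀ i : Fin (4*n+1), B i i = matG n i i := by
    intro i
    have h1' := hCcol i i
    have h2' := hconstC i
    have := h1'.trans (h2'.trans hc0)
    linarith
  calc ∑ i, (h.eigenvalues i)⁻¹ = ∑ i, B i i := htrB.symm
    _ = ∑ i, matG n i i := Finset.sum_congr rfl fun i _ => hBG i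
    _ = ((4*(n:ℝ)+1)^2 - 1)/12 := traceG n
    _ = (n : ℝ) * (4 * n + 2) / 3 := by push_cast; ring
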